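/- arXiv:1111.6796 — 3 statements merged into one kernel-verified Lean document; each statement's English description precedes it below -/
import Mathlib

section
/- (Langlands decomposition of the stabilizer of ∞.) Let G ∈ U(3,1) be a 4×4 complex matrix with G₄₁ = 0. Then there exist λ ∈ ℂ with |λ| = 1, a real number r > 0, τ = (τ₁, τ₂) ∈ ℂ², t ∈ ℝ, and a 2×2 complex matrix U with U*U = I₂, such that G = λ · N_(τ,t) · A_r · M_U. -/
open Matrix Complex

/-- ω = (−1 + i√3)/2, a primitive cube root of unity. -/
noncomputable def ω : ℂ := (-1 + Complex.I * Real.sqrt 3) / 2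

/-- The Eisenstein integers Z[ω], as a subset of ℂ. -/
def Zω : Set ℂ := {z : ℂ | ∃ a b : ℤ, z = (a : ℂ) + (b : ℂ) * ω}

/-- The Hermitian form matrix J. -/
def Jm : Matrix (Fin 4) (Fin 4) ℂ := !![0,0,0,1; 0,1,0,0; 0,0,1,0; 1,0,0,0]

/-- Heisenberg translation N_(τ,t). -/
noncomputable def N (τ₁ τ₂ : ℂ) (t : ℝ) : Matrix (Fin 4) (Fin 4) ℂ :=
  !![1, -(starRingEnd ℂ) τ₁, -(starRingEnd ℂ) τ₂,
       (-((Complex.normSq τ₁ : ℂ) + (Complex.normSq τ₂ : ℂ)) + Complex.I * (t : ℝ)) / 2;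
     0, 1, 0, τ₁;
     0, 0, 1, τ₂;
     0, 0, 0, 1]

/-- Heisenberg rotation M_U = diag(1, U, 1). -/
def M (U : Matrix (Fin 2) (Fin 2) ℂ) : Matrix (Fin 4) (Fin 4) ℂ :=
  !![1, 0, 0, 0;
     0, U 0 0, U 0 1, 0;
     0, U 1 0, U 1 1, 0;
     0, 0, 0, 1]

/-- Heisenberg dilation A_r = diag(r, 1, 1, 1/r). -/
noncomputable def Ad (r : ℝ) : Matrix (Fin 4) (Fin 4) ℂ :=
  !![(r : ℂ), 0, 0, 0; 0, 1, 0, 0; 0, 0, 1, 0; 0, 0, 0, (r : ℂ)⁻¹]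

noncomputable def U₁ : Matrix (Fin 2) (Fin 2) ℂ := !![0, 1; 1, 0]
noncomputable def U₂ : Matrix (Fin 2) (Fin 2) ℂ := !![-ω, 0; 0, 1]

/-- The Heisenberg translation N₁ = N_((1,0)ᵀ, √3). -/
noncomputable def N₁ : Matrix (Fin 4) (Fin 4) ℂ := N 1 0 (Real.sqrt 3)

/-- The involution R. -/
def Rmat : Matrix (Fin 4) (Fin 4) ℂ := !![0,0,0,1; 0,-1,0,0; 0,0,-1,0; 1,0,0,0]

/-- The generators {N₁, M_{U₁}, M_{U₂}} of the stabilizer of ∞, as a subset of GL(4,ℂ). -/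
noncomputable def gens3 : Set (GL (Fin 4) ℂ) :=
  {g | (g : Matrix (Fin 4) (Fin 4) ℂ) = N₁ ∨ (g : Matrix (Fin 4) (Fin 4) ℂ) = M U₁ ∨
       (g : Matrix (Fin 4) (Fin 4) ℂ) = M U₂}

/-- The generators {U₁, U₂}, as a subset of GL(2,ℂ). -/
noncomputable def gens2 : Set (GL (Fin 2) ℂ) :=
  {g | (g : Matrix (Fin 2) (Fin 2) ℂ) = U₁ ∨ (g : Matrix (Fin 2) (Fin 2) ℂ) = U₂}

/-- The generators {N₁, M_{U₁}, M_{U₂}, R}, as a subset of GL(4,ℂ). -/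
noncomputable def gens4 : Set (GL (Fin 4) ℂ) :=
  {g | (g : Matrix (Fin 4) (Fin 4) ℂ) = N₁ ∨ (g : Matrix (Fin 4) (Fin 4) ℂ) = M U₁ ∨
       (g : Matrix (Fin 4) (Fin 4) ℂ) = M U₂ ∨ (g : Matrix (Fin 4) (Fin 4) ℂ) = Rmat}

theorem mul_fin_four' {α} [AddCommMonoid α] [Mul α]
    (a₁₁ a₁₂ a₁₃ a₁₄ a₂₁ a₂₂ a₂₃ a₂₄ a₃₁ a₃₂ a₃₃ a₃₄ a₄₁ a₄₂ a₄₃ a₄₄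
     b₁₁ b₁₂ b₁₃ b₁₄ b₂₁ b₂₂ b₂₃ b₂₄ b₃₁ b₃₂ b₃₃ b₃₄ b₄₁ b₄₂ b₄₃ b₄₄ : α) :
    !![a₁₁, a₁₂, a₁₃, a₁₄;
       a₂₁, a₂₂, a₂₃, a₂₄;
       a₃₁, a₃₂, a₃₃, a₃₄;
       a₄₁, a₄₂, a₄₃, a₄₄] * !![b₁₁, b₁₂, b₁₃, b₁₄;
                                b₂₁, b₂₂, b₂₃, b₂₄;
                                b₃₁, b₃₂, b₃₃, b₃₄;
                                b₄₁, b₄₂, b₄₃, b₄₄] =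
    !![a₁₁*b₁₁ + a₁₂*b₂₁ + a₁₃*b₃₁ + a₁₄*b₄₁, a₁₁*b₁₂ + a₁₂*b₂₂ + a₁₃*b₃₂ + a₁₄*b₄₂,
         a₁₁*b₁₃ + a₁₂*b₂₃ + a₁₃*b₃₃ + a₁₄*b₄₃, a₁₁*b₁₄ + a₁₂*b₂₄ + a₁₃*b₃₄ + a₁₄*b₄₄;
       a₂₁*b₁₁ + a₂₂*b₂₁ + a₂₃*b₃₁ + a₂₄*b₄₁, a₂₁*b₁₂ + a₂₂*b₂₂ + a₂₃*b₃₂ + a₂₄*b₄₂,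
         a₂₁*b₁₃ + a₂₂*b₂₃ + a₂₃*b₃₃ + a₂₄*b₄₃, a₂₁*b₁₄ + a₂₂*b₂₄ + a₂₃*b₃₄ + a₂₄*b₄₄;
       a₃₁*b₁₁ + a₃₂*b₂₁ + a₃₃*b₃₁ + a₃₄*b₄₁, a₃₁*b₁₂ + a₃₂*b₂₂ + a₃₃*b₃₂ + a₃₄*b₄₂,
         a₃₁*b₁₃ + a₃₂*b₂₃ + a₃₃*b₃₃ + a₃₄*b₄₃, a₃₁*b₁₄ + a₃₂*b₂₄ + a₃₃*b₃₄ + a₃₄*b₄₄;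
       a₄₁*b₁₁ + a₄₂*b₂₁ + a₄₃*b₃₁ + a₄₄*b₄₁, a₄₁*b₁₂ + a₄₂*b₂₂ + a₄₃*b₃₂ + a₄₄*b₄₂,
         a₄₁*b₁₃ + a₄₂*b₂₃ + a₄₃*b₃₃ + a₄₄*b₄₃, a₄₁*b₁₄ + a₄₂*b₂₄ + a₄₃*b₃₄ + a₄₄*b₄₄] := by
  ext i j
  fin_cases i <;> fin_cases j
    <;> simp [Matrix.mul_apply, dotProduct, Fin.sum_univ_succ, ← add_assoc]

lemma NAM_prod_eq (τ₁ τ₂ : ℂ) (t : ℝ) (r : ℝ) (U : Matrix (Fin 2) (Fin 2) ℂ) :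
    N τ₁ τ₂ t * Ad r * M U =
    !![(r:ℂ),
       -((starRingEnd ℂ) τ₁ * U 0 0) - (starRingEnd ℂ) τ₂ * U 1 0,
       -((starRingEnd ℂ) τ₁ * U 0 1) - (starRingEnd ℂ) τ₂ * U 1 1,
       ((-((Complex.normSq τ₁ : ℂ) + (Complex.normSq τ₂ : ℂ)) + Complex.I * (t : ℝ)) / 2) * (r:ℂ)⁻¹;
       0, U 0 0, U 0 1, τ₁ * (r:ℂ)⁻¹;
       0, U 1 0, U 1 1, τ₂ * (r:ℂ)⁻¹;
       0, 0, 0, (r:ℂ)⁻¹] := by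
  rw [N, Ad, M, mul_fin_four', mul_fin_four']
  congr 1 <;> ring

/-- Langlands decomposition: any G ∈ U(3,1) with G₄₁ = 0 is a unit scalar multiple of
N_(τ,t) · A_r · M_U. -/
theorem stmt2 (G : Matrix (Fin 4) (Fin 4) ℂ) (hG : Gᴴ * Jm * G = Jm) (h41 : G 3 0 = 0) :
    ∃ (lam : ℂ) (r t : ℝ) (τ₁ τ₂ : ℂ) (U : Matrix (Fin 2) (Fin 2) ℂ),
      ‖lam‖ = 1 ∧ 0 < r ∧ Uᴴ * U = 1 ∧
      G = lam • (N τ₁ τ₂ t * Ad r * M U) := by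
  have key : ∀ i j, (starRingEnd ℂ) (G 0 i) * G 3 j + (starRingEnd ℂ) (G 1 i) * G 1 j
      + (starRingEnd ℂ) (G 2 i) * G 2 j + (starRingEnd ℂ) (G 3 i) * G 0 j = Jm i j := by
    intro i j
    have h := congrFun (congrFun hG i) j
    simp [Matrix.mul_apply, Fin.sum_univ_four, Jm, Matrix.conjTranspose_apply] at h ⊢
    fin_cases i <;> fin_cases j <;> simp at h ⊢ <;> linear_combination h
  have k00 := key 0 0
  rw [h41] at k00
  simp [Jm] at k00
  have hsum : (Complex.normSq (G 1 0) : ℂ) + Complex.normSq (G 2 0) = 0 := by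
    rw [Complex.normSq_eq_conj_mul_self, Complex.normSq_eq_conj_mul_self]
    linear_combination k00
  have hsum' : Complex.normSq (G 1 0) + Complex.normSq (G 2 0) = 0 := by exact_mod_cast hsum
  have h10 : G 1 0 = 0 := by
    rw [← Complex.normSq_eq_zero]
    have := Complex.normSq_nonneg (G 1 0); have := Complex.normSq_nonneg (G 2 0); linarith
  have h20 : G 2 0 = 0 := by
    rw [← Complex.normSq_eq_zero]
    have := Complex.normSq_nonneg (G 1 0); have := Complex.normSq_nonneg (G 2 0); linarith
  have k03 := key 0 3
  rw [h41, h10, h20] at k03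
  simp [Jm] at k03
  -- k03 : conj (G 0 0) * G 3 3 = 1
  have h00 : G 0 0 ≠ 0 := by
    intro h; rw [h] at k03; simp at k03
  have k01 := key 0 1; have k02 := key 0 2
  rw [h41, h10, h20] at k01 k02
  simp [Jm] at k01 k02
  have h31 : G 3 1 = 0 := k01.resolve_left h00
  have h32 : G 3 2 = 0 := k02.resolve_left h00
  -- clean middle relations
  have kt11 := key 1 1; have kt12 := key 1 2; have kt21 := key 2 1; have kt22 := key 2 2
  have kt31 := key 3 1; have kt32 := key 3 2; have kt33 := key 3 3
  simp only [h31, h32, mul_zero, zero_mul, map_zero, zero_add, add_zero, Jm] at kt11 kt12 kt21 kt22 kt31 kt32 kt33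
  simp [Matrix.vecHead, Matrix.vecTail] at kt11 kt12 kt21 kt22 kt31 kt32 kt33
  -- scalars
  set r : ℝ := ‖G 0 0‖ with hrdef
  have hr : 0 < r := norm_pos_iff.mpr h00
  have hr0 : (r : ℂ) ≠ 0 := by exact_mod_cast hr.ne'
  set lam : ℂ := G 0 0 / r with hlamdef
  have hB : lam * (r:ℂ) = G 0 0 := by rw [hlamdef]; field_simp
  have habs : ‖lam‖ = 1 := by
    rw [hlamdef, norm_div, Complex.norm_real, Real.norm_eq_abs, abs_of_pos hr, ← hrdef, div_self hr.ne']
  have hC : (starRingEnd ℂ) lam * lam = 1 := by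
    rw [← Complex.normSq_eq_conj_mul_self, ← Complex.sq_norm, habs]; norm_num
  have hnorm : (starRingEnd ℂ) (G 0 0) * G 0 0 = (r:ℂ) * r := by
    rw [← Complex.normSq_eq_conj_mul_self, ← Complex.sq_norm, ← hrdef]; push_cast; ring
  have h33 : (r : ℂ) * G 3 3 = lam := by
    rw [hlamdef, eq_div_iff hr0]; linear_combination G 0 0 * k03 - G 3 3 * hnorm
  have h33c : (r : ℂ) * (starRingEnd ℂ) (G 3 3) = (starRingEnd ℂ) lam := by
    have := congrArg (starRingEnd ℂ) h33; simpa using this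
  -- data
  set cl : ℂ := (starRingEnd ℂ) lam with hcl
  have hclc : (starRingEnd ℂ) cl = lam := by rw [hcl, Complex.conj_conj]
  set τ₁ : ℂ := (r:ℂ) * cl * G 1 3 with hτ1
  set τ₂ : ℂ := (r:ℂ) * cl * G 2 3 with hτ2
  have hτ1c : (starRingEnd ℂ) τ₁ = (r:ℂ) * lam * (starRingEnd ℂ) (G 1 3) := by
    rw [hτ1, _root_.map_mul, _root_.map_mul, hclc, Complex.conj_ofReal]
  have hτ2c : (starRingEnd ℂ) τ₂ = (r:ℂ) * lam * (starRingEnd ℂ) (G 2 3) := by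
    rw [hτ2, _root_.map_mul, _root_.map_mul, hclc, Complex.conj_ofReal]
  set U : Matrix (Fin 2) (Fin 2) ℂ := !![cl * G 1 1, cl * G 1 2; cl * G 2 1, cl * G 2 2] with hU
  set z : ℂ := 2 * (r:ℂ) * cl * G 0 3 with hz
  have hzc : (starRingEnd ℂ) z = 2 * (r:ℂ) * lam * (starRingEnd ℂ) (G 0 3) := by
    rw [hz]; simp only [_root_.map_mul, hclc, Complex.conj_ofReal, map_ofNat]
  have hUU : Uᴴ * U = 1 := by
    ext i j
    fin_cases i <;> fin_cases j <;>
      simp [hU, Matrix.mul_apply, Fin.sum_univ_two, Matrix.conjTranspose_apply,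
        Matrix.one_apply, _root_.map_mul, hclc]
    · linear_combination ((starRingEnd ℂ) (G 1 1) * G 1 1 + (starRingEnd ℂ) (G 2 1) * G 2 1) * hC + kt11
    · linear_combination ((starRingEnd ℂ) (G 1 1) * G 1 2 + (starRingEnd ℂ) (G 2 1) * G 2 2) * hC + kt12
    · linear_combination ((starRingEnd ℂ) (G 1 2) * G 1 1 + (starRingEnd ℂ) (G 2 2) * G 2 1) * hC + kt21
    · linear_combination ((starRingEnd ℂ) (G 1 2) * G 1 2 + (starRingEnd ℂ) (G 2 2) * G 2 2) * hC + kt22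
  have hns1 : (Complex.normSq τ₁ : ℂ) = (starRingEnd ℂ) τ₁ * τ₁ := Complex.normSq_eq_conj_mul_self
  have hns2 : (Complex.normSq τ₂ : ℂ) = (starRingEnd ℂ) τ₂ * τ₂ := Complex.normSq_eq_conj_mul_self
  have hrec : z + (starRingEnd ℂ) z = -2 * ((Complex.normSq τ₁ : ℂ) + (Complex.normSq τ₂ : ℂ)) := by
    rw [hns1, hns2, hτ1c, hτ2c, hzc, hτ1, hτ2, hz]
    linear_combination 2*(r:ℂ)^2*kt33 - 2*(r:ℂ)*(starRingEnd ℂ) (G 0 3)*h33 - 2*(r:ℂ)*(G 0 3)*h33c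
      + 2*(r:ℂ)^2*((starRingEnd ℂ) (G 1 3) * G 1 3 + (starRingEnd ℂ) (G 2 3) * G 2 3)*hC
  have hre : (z.re : ℂ) = -((Complex.normSq τ₁ : ℂ) + (Complex.normSq τ₂ : ℂ)) := by
    have h2 := Complex.add_conj z
    push_cast at h2
    linear_combination (hrec - h2) / 2
  have hT : (-((Complex.normSq τ₁ : ℂ) + (Complex.normSq τ₂ : ℂ)) + Complex.I * ((z.im : ℝ) : ℂ)) = z := by
    rw [← hre]
    linear_combination Complex.re_add_im z
  refine ⟨lam, r, z.im, τ₁, τ₂, U, habs, hr, hUU, ?_⟩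
  have hrinv : (r:ℂ) * (r:ℂ)⁻¹ = 1 := mul_inv_cancel₀ hr0
  rw [NAM_prod_eq]
  ext i j
  fin_cases i <;> fin_cases j
  · simp [hU, Matrix.smul_apply, Matrix.vecHead, Matrix.vecTail, hτ1c, hτ2c]
    linear_combination -hB
  · simp [hU, Matrix.smul_apply, Matrix.vecHead, Matrix.vecTail, hτ1c, hτ2c]
    linear_combination lam^2*cl*(r:ℂ)*kt31 - lam^2*cl*(G 0 1)*h33c - (G 0 1)*(lam*cl+1)*hC
  · simp [hU, Matrix.smul_apply, Matrix.vecHead, Matrix.vecTail, hτ1c, hτ2c]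
    linear_combination lam^2*cl*(r:ℂ)*kt32 - lam^2*cl*(G 0 2)*h33c - (G 0 2)*(lam*cl+1)*hC
  · simp [hU, Matrix.smul_apply, Matrix.vecHead, Matrix.vecTail, hτ1c, hτ2c]
    linear_combination (-(lam/2) * (r:ℂ)⁻¹) * hT + (-(lam/2) * (r:ℂ)⁻¹) * hz
      - lam*cl*(G 0 3)*hrinv - (G 0 3)*hC
  · simp [hU, Matrix.smul_apply, Matrix.vecHead, Matrix.vecTail, h10]
  · simp [hU, Matrix.smul_apply, Matrix.vecHead, Matrix.vecTail]
    linear_combination -(G 1 1) * hC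
  · simp [hU, Matrix.smul_apply, Matrix.vecHead, Matrix.vecTail]
    linear_combination -(G 1 2) * hC
  · simp [hU, Matrix.smul_apply, Matrix.vecHead, Matrix.vecTail]
    linear_combination (-lam * (r:ℂ)⁻¹) * hτ1 - lam*cl*(G 1 3)*hrinv - (G 1 3)*hC
  · simp [hU, Matrix.smul_apply, Matrix.vecHead, Matrix.vecTail, h20]
  · simp [hU, Matrix.smul_apply, Matrix.vecHead, Matrix.vecTail]
    linear_combination -(G 2 1) * hC
  · simp [hU, Matrix.smul_apply, Matrix.vecHead, Matrix.vecTail]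
    linear_combination -(G 2 2) * hC
  · simp [hU, Matrix.smul_apply, Matrix.vecHead, Matrix.vecTail]
    linear_combination (-lam * (r:ℂ)⁻¹) * hτ2 - lam*cl*(G 2 3)*hrinv - (G 2 3)*hC
  · simp [hU, Matrix.smul_apply, Matrix.vecHead, Matrix.vecTail, h41]
  · simp [hU, Matrix.smul_apply, Matrix.vecHead, Matrix.vecTail, h31]
  · simp [hU, Matrix.smul_apply, Matrix.vecHead, Matrix.vecTail, h32]
  · simp [hU, Matrix.smul_apply, Matrix.vecHead, Matrix.vecTail]
    linear_combination (r:ℂ)⁻¹ * h33 - (G 3 3)*hrinv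
end

section
/- The group U(2;Z[ω]) of 2×2 unitary matrices with Eisenstein integer entries is generated by the two matrices U₁ = [[0,1],[1,0]] and U₂ = [[−ω,0],[0,1]]; that is, U(2;Z[ω]) equals the subgroup of GL(2,ℂ) generated by {U₁, U₂}. -/
open Matrix Complex

lemma hω1 : ω^2 + ω + 1 = 0 := by
  have h3 : ((Real.sqrt 3 : ℝ) : ℂ)^2 = 3 := by
    rw [← Complex.ofReal_pow, Real.sq_sqrt (by norm_num : (3:ℝ) ≥ 0)]; norm_num
  unfold ω
  linear_combination (((Real.sqrt 3 : ℝ) : ℂ)^2/4) * Complex.I_sq - (1/4) * h3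

lemma hconjω : (starRingEnd ℂ) ω = -1 - ω := by
  have h2 : (starRingEnd ℂ) 2 = 2 := by simp [Complex.ext_iff]
  unfold ω
  simp [map_div₀, Complex.conj_I, Complex.conj_ofReal, h2]
  ring

-- key norm identity
lemma key (a b : ℤ) :
    (starRingEnd ℂ) ((a:ℂ) + (b:ℂ)*ω) * ((a:ℂ) + (b:ℂ)*ω) = ((a^2 - a*b + b^2 : ℤ) : ℂ) := by
  rw [map_add, _root_.map_mul, map_intCast, map_intCast, hconjω]
  push_cast
  linear_combination (-(b:ℂ)^2) * hω1

-- Zω closure lemmas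
lemma Zω_add {x y : ℂ} (hx : x ∈ Zω) (hy : y ∈ Zω) : x + y ∈ Zω := by
  obtain ⟨a,b,rfl⟩ := hx; obtain ⟨c,d,rfl⟩ := hy
  exact ⟨a+c, b+d, by push_cast; ring⟩

lemma Zω_mul {x y : ℂ} (hx : x ∈ Zω) (hy : y ∈ Zω) : x * y ∈ Zω := by
  obtain ⟨a,b,rfl⟩ := hx; obtain ⟨c,d,rfl⟩ := hy
  refine ⟨a*c - b*d, a*d + b*c - b*d, ?_⟩
  push_cast
  linear_combination ((b:ℂ)*(d:ℂ)) * hω1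

lemma Zω_conj {x : ℂ} (hx : x ∈ Zω) : (starRingEnd ℂ) x ∈ Zω := by
  obtain ⟨a,b,rfl⟩ := hx
  refine ⟨a - b, -b, ?_⟩
  rw [map_add, _root_.map_mul, map_intCast, map_intCast, hconjω]
  push_cast; ring

lemma Zω_zero : (0:ℂ) ∈ Zω := ⟨0,0, by simp⟩
lemma Zω_one : (1:ℂ) ∈ Zω := ⟨1,0, by simp⟩

-- integer norm arithmetic
lemma nm_nonneg (a b : ℤ) : 0 ≤ a^2 - a*b + b^2 := by nlinarith [sq_nonneg (a-b), sq_nonneg a, sq_nonneg b]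

lemma nm_zero {a b : ℤ} (h : a^2 - a*b + b^2 = 0) : a = 0 ∧ b = 0 := by
  constructor <;> nlinarith [sq_nonneg (a-b), sq_nonneg (a+b), sq_nonneg a, sq_nonneg b]

lemma nm_one {a b : ℤ} (h : a^2 - a*b + b^2 = 1) :
    (a = 1 ∧ b = 0) ∨ (a = -1 ∧ b = 0) ∨ (a = 0 ∧ b = 1) ∨ (a = 0 ∧ b = -1) ∨
    (a = 1 ∧ b = 1) ∨ (a = -1 ∧ b = -1) := by
  have ha : a^2 ≤ 1 := by nlinarith [sq_nonneg (a - 2*b)]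
  have hb : b^2 ≤ 1 := by nlinarith [sq_nonneg (2*a - b)]
  have ha' : -1 ≤ a ∧ a ≤ 1 := abs_le.mp (by nlinarith [abs_nonneg a, _root_.sq_abs a] : |a| ≤ 1)
  have hb' : -1 ≤ b ∧ b ≤ 1 := abs_le.mp (by nlinarith [abs_nonneg b, _root_.sq_abs b] : |b| ≤ 1)
  obtain ⟨h1,h2⟩ := ha'; obtain ⟨h3,h4⟩ := hb'
  interval_cases a <;> interval_cases b <;> omega


lemma U1_mul_U1 : U₁ * U₁ = 1 := by
  simp [U₁, Matrix.mul_fin_two, Matrix.one_fin_two]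

lemma U2_mul_inv : U₂ * !![1+ω,0;0,(1:ℂ)] = 1 := by
  ext i j
  fin_cases i <;> fin_cases j <;>
    simp [U₂, Matrix.mul_apply, Fin.sum_univ_two, Matrix.one_apply] <;>
    linear_combination -hω1

lemma inv_mul_U2 : !![1+ω,0;0,(1:ℂ)] * U₂ = 1 := by
  ext i j
  fin_cases i <;> fin_cases j <;>
    simp [U₂, Matrix.mul_apply, Fin.sum_univ_two, Matrix.one_apply] <;>
    linear_combination -hω1

lemma mulD (x y : ℂ) : !![x,0;0,(1:ℂ)] * !![y,0;0,(1:ℂ)] = !![x*y,0;0,1] := by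
  simp [Matrix.mul_fin_two]

lemma U1_mul_D (x y : ℂ) : U₁ * !![x,0;0,y] = !![0,y;x,0] := by
  simp [U₁, Matrix.mul_fin_two]

lemma D_mul_U1 (x y : ℂ) : !![0,y;x,0] * U₁ = !![y,0;0,x] := by
  simp [U₁, Matrix.mul_fin_two]

noncomputable def u1 : GL (Fin 2) ℂ := ⟨U₁, U₁, U1_mul_U1, U1_mul_U1⟩
noncomputable def u2 : GL (Fin 2) ℂ := ⟨U₂, !![1+ω,0;0,(1:ℂ)], U2_mul_inv, inv_mul_U2⟩

abbrev H : Subgroup (GL (Fin 2) ℂ) := Subgroup.closure gens2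

lemma u1_mem : u1 ∈ H := Subgroup.subset_closure (Or.inl rfl)
lemma u2_mem : u2 ∈ H := Subgroup.subset_closure (Or.inr rfl)

def Root (u : ℂ) : Prop :=
  u = 1 ∨ u = -1 ∨ u = ω ∨ u = -ω ∨ u = 1 + ω ∨ u = -1 - ω

lemma left_mem {u : ℂ} (hu : Root u) :
    ∃ g ∈ H, (g : Matrix (Fin 2) (Fin 2) ℂ) = !![u,0;0,(1:ℂ)] := by
  have c1 : (u2 : Matrix (Fin 2) (Fin 2) ℂ) = !![-ω,0;0,(1:ℂ)] := rfl
  have c2 : ((u2*u2 : GL (Fin 2) ℂ) : Matrix (Fin 2) (Fin 2) ℂ) = !![-1-ω,0;0,(1:ℂ)] := by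
    rw [Units.val_mul, c1, mulD,
      show (-ω : ℂ) * -ω = -1-ω from by linear_combination hω1]
  have c3 : ((u2*u2*u2 : GL (Fin 2) ℂ) : Matrix (Fin 2) (Fin 2) ℂ) = !![-1,0;0,(1:ℂ)] := by
    rw [Units.val_mul, c2, c1, mulD,
      show ((-1-ω : ℂ)) * -ω = -1 from by linear_combination hω1]
  have c4 : ((u2*u2*u2*u2 : GL (Fin 2) ℂ) : Matrix (Fin 2) (Fin 2) ℂ) = !![ω,0;0,(1:ℂ)] := by
    rw [Units.val_mul, c3, c1, mulD,
      show ((-1 : ℂ)) * -ω = ω from by ring]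
  have c5 : ((u2*u2*u2*u2*u2 : GL (Fin 2) ℂ) : Matrix (Fin 2) (Fin 2) ℂ) = !![1+ω,0;0,(1:ℂ)] := by
    rw [Units.val_mul, c4, c1, mulD,
      show (ω : ℂ) * -ω = 1+ω from by linear_combination -hω1]
  rcases hu with h|h|h|h|h|h <;> subst h
  · exact ⟨1, one_mem H, by simp [Matrix.one_fin_two]⟩
  · exact ⟨u2*u2*u2, mul_mem (mul_mem u2_mem u2_mem) u2_mem, c3⟩
  · exact ⟨u2*u2*u2*u2, mul_mem (mul_mem (mul_mem u2_mem u2_mem) u2_mem) u2_mem, c4⟩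
  · exact ⟨u2, u2_mem, c1⟩
  · exact ⟨u2*u2*u2*u2*u2, mul_mem (mul_mem (mul_mem (mul_mem u2_mem u2_mem) u2_mem) u2_mem) u2_mem, c5⟩
  · exact ⟨u2*u2, mul_mem u2_mem u2_mem, c2⟩

lemma diag_mem {u v : ℂ} (hu : Root u) (hv : Root v) :
    ∃ g ∈ H, (g : Matrix (Fin 2) (Fin 2) ℂ) = !![u,0;0,v] := by
  obtain ⟨g, hg, hgc⟩ := left_mem hu
  obtain ⟨g', hg', hgc'⟩ := left_mem hv
  refine ⟨g * (u1 * g' * u1), mul_mem hg (mul_mem (mul_mem u1_mem hg') u1_mem), ?_⟩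
  have : (u1 : Matrix (Fin 2) (Fin 2) ℂ) = U₁ := rfl
  have mulD2 : ∀ x y : ℂ, !![x,0;0,(1:ℂ)] * !![1,0;0,y] = !![x,0;0,y] := by
    intro x y; simp [Matrix.mul_fin_two]
  rw [Units.val_mul, Units.val_mul, Units.val_mul, hgc, hgc', this, U1_mul_D, D_mul_U1, mulD2]

lemma anti_mem {u v : ℂ} (hu : Root u) (hv : Root v) :
    ∃ g ∈ H, (g : Matrix (Fin 2) (Fin 2) ℂ) = !![0,u;v,0] := by
  obtain ⟨g, hg, hgc⟩ := diag_mem hv hu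
  refine ⟨u1 * g, mul_mem u1_mem hg, ?_⟩
  have h1 : (u1 : Matrix (Fin 2) (Fin 2) ℂ) = U₁ := rfl
  rw [Units.val_mul, h1, hgc, U1_mul_D]

lemma root_of_nm_one {a b : ℤ} (h : a^2 - a*b + b^2 = 1) : Root ((a:ℂ) + (b:ℂ)*ω) := by
  unfold Root
  rcases nm_one h with ⟨h1,h2⟩|⟨h1,h2⟩|⟨h1,h2⟩|⟨h1,h2⟩|⟨h1,h2⟩|⟨h1,h2⟩ <;> subst h1 <;> subst h2
  · exact Or.inl (by push_cast; ring)
  · exact Or.inr (Or.inl (by push_cast; ring))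
  · exact Or.inr (Or.inr (Or.inl (by push_cast; ring)))
  · exact Or.inr (Or.inr (Or.inr (Or.inl (by push_cast; ring))))
  · exact Or.inr (Or.inr (Or.inr (Or.inr (Or.inl (by push_cast; ring)))))
  · exact Or.inr (Or.inr (Or.inr (Or.inr (Or.inr (by push_cast; ring)))))

-- the unitary subgroup
noncomputable def S : Subgroup (GL (Fin 2) ℂ) where
  carrier := {g | (g : Matrix (Fin 2) (Fin 2) ℂ)ᴴ * g = 1 ∧
      ∀ i j, (g : Matrix (Fin 2) (Fin 2) ℂ) i j ∈ Zω}
  one_mem' := by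
    constructor
    · simp
    · intro i j
      rw [Units.val_one, Matrix.one_apply]
      split
      · exact Zω_one
      · exact Zω_zero
  mul_mem' := by
    rintro a b ⟨ha1, ha2⟩ ⟨hb1, hb2⟩
    constructor
    · rw [Units.val_mul, conjTranspose_mul, mul_assoc,
        ← mul_assoc (↑a : Matrix (Fin 2) (Fin 2) ℂ)ᴴ, ha1, one_mul, hb1]
    · intro i j
      rw [Units.val_mul, Matrix.mul_apply, Fin.sum_univ_two]
      exact Zω_add (Zω_mul (ha2 i 0) (hb2 0 j)) (Zω_mul (ha2 i 1) (hb2 1 j))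
  inv_mem' := by
    rintro g ⟨h1, h2⟩
    have hinv : ((g⁻¹ : GL (Fin 2) ℂ) : Matrix (Fin 2) (Fin 2) ℂ)
        = ((g : Matrix (Fin 2) (Fin 2) ℂ))ᴴ := by
      calc ((g⁻¹ : GL (Fin 2) ℂ) : Matrix (Fin 2) (Fin 2) ℂ)
          = 1 * ↑g⁻¹ := (one_mul _).symm
        _ = ((↑g)ᴴ * ↑g) * ↑g⁻¹ := by rw [h1]
        _ = (↑g)ᴴ * (↑g * ↑g⁻¹) := mul_assoc _ _ _
        _ = (↑g)ᴴ := by rw [← Units.val_mul, mul_inv_cancel, Units.val_one, mul_one]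
    constructor
    · rw [hinv, conjTranspose_conjTranspose]
      exact mul_eq_one_comm.mp h1
    · intro i j
      rw [hinv, Matrix.conjTranspose_apply]
      exact Zω_conj (h2 j i)

lemma gens2_sub_S : gens2 ⊆ (S : Set (GL (Fin 2) ℂ)) := by
  rintro g (h | h) <;> rw [SetLike.mem_coe] <;>
    constructor
  · rw [h]
    ext i j
    fin_cases i <;> fin_cases j <;>
      simp [U₁, Matrix.mul_apply, Matrix.conjTranspose_apply, Fin.sum_univ_two, Matrix.one_apply]
  · intro i j
    rw [h]
    fin_cases i <;> fin_cases j <;> simp [U₁] <;> first | exact Zω_zero | exact Zω_one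
  · rw [h]
    ext i j
    fin_cases i <;> fin_cases j <;>
      simp [U₂, Matrix.mul_apply, Matrix.conjTranspose_apply, Fin.sum_univ_two,
        Matrix.one_apply, hconjω] <;>
      linear_combination -hω1
  · intro i j
    rw [h]
    fin_cases i <;> fin_cases j <;> simp [U₂] <;>
      first
        | exact Zω_zero
        | exact Zω_one
        | exact ⟨0, -1, by push_cast; ring⟩

lemma sum_one {m n : ℤ} (hm : 0 ≤ m) (hn : 0 ≤ n) (h : m + n = 1) :
    (m = 1 ∧ n = 0) ∨ (m = 0 ∧ n = 1) := by omega

/-- U(2; Z[ω]) is generated by U₁ and U₂. -/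
theorem stmt4 (A : Matrix (Fin 2) (Fin 2) ℂ) :
    (Aᴴ * A = 1 ∧ ∀ i j, A i j ∈ Zω) ↔
      ∃ g ∈ Subgroup.closure gens2, (g : Matrix (Fin 2) (Fin 2) ℂ) = A := by
  constructor
  · rintro ⟨hA, hZ⟩
    obtain ⟨a1, a2, ha⟩ := hZ 0 0
    obtain ⟨b1, b2, hb⟩ := hZ 0 1
    obtain ⟨c1, c2, hc⟩ := hZ 1 0
    obtain ⟨d1, d2, hd⟩ := hZ 1 1
    have e00 := congrFun (congrFun hA 0) 0
    have e01 := congrFun (congrFun hA 0) 1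
    have e11 := congrFun (congrFun hA 1) 1
    simp only [Matrix.mul_apply, Matrix.conjTranspose_apply, Fin.sum_univ_two,
      Matrix.one_apply_eq, Matrix.one_apply, Fin.isValue, Complex.star_def] at e00 e01 e11
    norm_num at e01
    rw [ha, hc, key, key] at e00
    rw [hb, hd, key, key] at e11
    have E1 : a1^2 - a1*a2 + a2^2 + (c1^2 - c1*c2 + c2^2) = 1 := by exact_mod_cast e00
    have E2 : b1^2 - b1*b2 + b2^2 + (d1^2 - d1*d2 + d2^2) = 1 := by exact_mod_cast e11
    rcases sum_one (nm_nonneg a1 a2) (nm_nonneg c1 c2) E1 with ⟨hna, hnc⟩ | ⟨hna, hnc⟩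
    · -- a is a unit, c = 0, diagonal case
      obtain ⟨hc1, hc2⟩ := nm_zero hnc
      have hc0 : A 1 0 = 0 := by rw [hc, hc1, hc2]; push_cast; ring
      have haa : (starRingEnd ℂ) (A 0 0) * A 0 0 = 1 := by
        rw [ha, key, hna]; norm_num
      have hane : A 0 0 ≠ 0 := right_ne_zero_of_mul_eq_one haa
      have hb0 : A 0 1 = 0 := by
        rw [hc0] at e01
        simp at e01
        rcases e01 with h | h
        · exact absurd h hane
        · exact h
      have hnb : b1^2 - b1*b2 + b2^2 = 0 := by
        have : ((b1^2 - b1*b2 + b2^2 : ℤ) : ℂ) = 0 := by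
          rw [← key, ← hb, hb0]; simp
        exact_mod_cast this
      have hnd : d1^2 - d1*d2 + d2^2 = 1 := by omega
      have Ra : Root (A 0 0) := by rw [ha]; exact root_of_nm_one hna
      have Rd : Root (A 1 1) := by rw [hd]; exact root_of_nm_one hnd
      obtain ⟨g, hg, hgc⟩ := diag_mem Ra Rd
      refine ⟨g, hg, ?_⟩
      rw [hgc]
      ext i j
      fin_cases i <;> fin_cases j <;> simp [hb0, hc0]
    · -- a = 0, antidiagonal case
      obtain ⟨ha1, ha2⟩ := nm_zero hna
      have ha0 : A 0 0 = 0 := by rw [ha, ha1, ha2]; push_cast; ring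
      have hcc : (starRingEnd ℂ) (A 1 0) * A 1 0 = 1 := by
        rw [hc, key, hnc]; norm_num
      have hcne : A 1 0 ≠ 0 := right_ne_zero_of_mul_eq_one hcc
      have hd0 : A 1 1 = 0 := by
        rw [ha0] at e01
        simp at e01
        rcases e01 with h | h
        · exact absurd h hcne
        · exact h
      have hnd : d1^2 - d1*d2 + d2^2 = 0 := by
        have : ((d1^2 - d1*d2 + d2^2 : ℤ) : ℂ) = 0 := by
          rw [← key, ← hd, hd0]; simp
        exact_mod_cast this
      have hnb : b1^2 - b1*b2 + b2^2 = 1 := by omega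
      have Rb : Root (A 0 1) := by rw [hb]; exact root_of_nm_one hnb
      have Rc : Root (A 1 0) := by rw [hc]; exact root_of_nm_one hnc
      obtain ⟨g, hg, hgc⟩ := anti_mem Rb Rc
      refine ⟨g, hg, ?_⟩
      rw [hgc]
      ext i j
      fin_cases i <;> fin_cases j <;> simp [ha0, hd0]
  · rintro ⟨g, hg, rfl⟩
    have hgS : g ∈ S := (Subgroup.closure_le S).mpr gens2_sub_S hg
    exact hgS
end

section
/- (Descent step.) Let G ∈ U(3,1) be a 4×4 matrix all of whose entries lie in Z[ω], and suppose G₄₁ ≠ 0. Then there exist τ = (τ₁, τ₂) with τ₁, τ₂ ∈ Z[ω] and k ∈ ℤ with k ≡ |τ₁|² + |τ₂|² (mod 2), such that, setting t = √3·k, the (4,1) entry of the product R · N_(τ,t) · G satisfies |(R · N_(τ,t) · G)₄₁|² ≤ (31/36)·|G₄₁|². -/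
open Matrix Complex

section Aux

private lemma case1' (s F H : ℝ) (hs : s^2 = 3) (hs1 : 1 ≤ s) (hF0 : 0 ≤ F) (hF : F ≤ 1/2)
    (hH0 : 0 ≤ H) (hline : F + s*H ≤ 1) : F^2 + H^2 ≤ 1/3 := by
  nlinarith [mul_nonneg (sub_nonneg.2 hF) (sub_nonneg.2 hline), mul_nonneg hF0 (sub_nonneg.2 hline),
    mul_nonneg hH0 (sub_nonneg.2 hline), sq_nonneg (F - 1/2), sq_nonneg (H - s/6),
    mul_nonneg (sub_nonneg.2 hF) hH0, mul_nonneg hF0 hH0, sq_nonneg (s*H - 1/2)]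

private lemma case2' (s F H : ℝ) (hs : s^2 = 3) (hs1 : 1 ≤ s) (hF0 : 0 ≤ F) (hF : F ≤ 1/2)
    (hH0 : 0 ≤ H) (hH : 4*H ≤ s) (hline : 1 ≤ F + s*H) :
    (1/2 - F)^2 + (s/2 - H)^2 ≤ 1/3 := by
  nlinarith [mul_nonneg (sub_nonneg.2 hF) (sub_nonneg.2 hline), mul_nonneg hF0 (sub_nonneg.2 hline),
    mul_nonneg hH0 (sub_nonneg.2 hline), sq_nonneg (F - 1/2), sq_nonneg (H - s/4),
    mul_nonneg (sub_nonneg.2 hF) hH0, mul_nonneg hF0 hH0,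
    mul_nonneg (sub_nonneg.2 hF) (sub_nonneg.2 hH), mul_nonneg hF0 (sub_nonneg.2 hH)]

private lemma pick' (s f η : ℝ) (hs : s^2 = 3) (hs1 : 1 ≤ s) (hf : |f| ≤ 1/2) (hη : |η| ≤ s/4) :
    f^2 + η^2 ≤ 1/3 ∨
    ((f - 1/2)^2 + (η - s/2)^2 ≤ 1/3 ∧ 0 ≤ f ∧ 0 ≤ η) ∨
    ((f + 1/2)^2 + (η - s/2)^2 ≤ 1/3 ∧ f < 0 ∧ 0 ≤ η) ∨
    ((f - 1/2)^2 + (η + s/2)^2 ≤ 1/3 ∧ 0 ≤ f ∧ η < 0) ∨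
    ((f + 1/2)^2 + (η + s/2)^2 ≤ 1/3 ∧ f < 0 ∧ η < 0) := by
  have hF0 := abs_nonneg f
  have hH0 := abs_nonneg η
  have hf2 := _root_.sq_abs f
  have hη2 := _root_.sq_abs η
  rcases le_or_gt (|f| + s * |η|) 1 with hline | hline
  · left
    have := case1' s |f| |η| hs hs1 hF0 hf hH0 hline
    nlinarith [this]
  · have h2 := case2' s |f| |η| hs hs1 hF0 hf hH0 (by linarith) (le_of_lt hline)
    rcases le_or_gt 0 f with hf0 | hf0 <;> rcases le_or_gt 0 η with hη0 | hη0
    · right; left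
      rw [_root_.abs_of_nonneg hf0, _root_.abs_of_nonneg hη0] at h2
      exact ⟨by nlinarith [h2], hf0, hη0⟩
    · right; right; right; left
      rw [_root_.abs_of_nonneg hf0, _root_.abs_of_neg hη0] at h2
      exact ⟨by nlinarith [h2], hf0, hη0⟩
    · right; right; left
      rw [_root_.abs_of_neg hf0, _root_.abs_of_nonneg hη0] at h2
      exact ⟨by nlinarith [h2], hf0, hη0⟩
    · right; right; right; right
      rw [_root_.abs_of_neg hf0, _root_.abs_of_neg hη0] at h2
      exact ⟨by nlinarith [h2], hf0, hη0⟩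

private lemma real_approx' (s X Y : ℝ) (hs : s^2 = 3) (hs1 : 1 ≤ s) :
    ∃ p q : ℤ, (X + p - q/2)^2 + (Y + q*(s/2))^2 ≤ 1/3 := by
  have hs0 : (0:ℝ) < s := by linarith
  obtain ⟨q, η, hηdef, hηabs⟩ : ∃ (q : ℤ) (η : ℝ), Y + q*(s/2) = η ∧ |η| ≤ s/4 := by
    refine ⟨-round (2*Y/s), Y + (-round (2*Y/s) : ℤ)*(s/2), rfl, ?_⟩
    have hY : Y = (2*Y/s)*(s/2) := by field_simp
    have h1 : Y + (-round (2*Y/s) : ℤ)*(s/2) = (2*Y/s - round (2*Y/s))*(s/2) := by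
      push_cast; nlinarith [hY]
    rw [h1, abs_mul, _root_.abs_of_pos (by positivity : (0:ℝ) < s/2)]
    nlinarith [abs_sub_round (2*Y/s), abs_nonneg (2*Y/s - round (2*Y/s))]
  obtain ⟨p, f, hfdef, hfabs⟩ : ∃ (p : ℤ) (f : ℝ), X + p - (q:ℝ)/2 = -f ∧ |f| ≤ 1/2 :=
    ⟨round ((q:ℝ)/2 - X), (q:ℝ)/2 - X - round ((q:ℝ)/2 - X), by ring, abs_sub_round _⟩
  rcases pick' s f η hs hs1 hfabs hηabs with h | ⟨h,hf0,hη0⟩ | ⟨h,hf0,hη0⟩ | ⟨h,hf0,hη0⟩ | ⟨h,hf0,hη0⟩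
  · exact ⟨p, q, by rw [hfdef, hηdef]; nlinarith [h]⟩
  · refine ⟨p, q - 1, ?_⟩
    have e1 : X + (p:ℝ) - ((q-1:ℤ):ℝ)/2 = -(f - 1/2) := by push_cast; linarith [hfdef]
    have e2 : Y + ((q-1:ℤ):ℝ)*(s/2) = η - s/2 := by push_cast; linear_combination hηdef
    rw [e1, e2]; nlinarith [h]
  · refine ⟨p - 1, q - 1, ?_⟩
    have e1 : X + ((p-1:ℤ):ℝ) - ((q-1:ℤ):ℝ)/2 = -(f + 1/2) := by push_cast; linarith [hfdef]
    have e2 : Y + ((q-1:ℤ):ℝ)*(s/2) = η - s/2 := by push_cast; linear_combination hηdef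
    rw [e1, e2]; nlinarith [h]
  · refine ⟨p + 1, q + 1, ?_⟩
    have e1 : X + ((p+1:ℤ):ℝ) - ((q+1:ℤ):ℝ)/2 = -(f - 1/2) := by push_cast; linarith [hfdef]
    have e2 : Y + ((q+1:ℤ):ℝ)*(s/2) = η + s/2 := by push_cast; linear_combination hηdef
    rw [e1, e2]; nlinarith [h]
  · refine ⟨p, q + 1, ?_⟩
    have e1 : X + (p:ℝ) - ((q+1:ℤ):ℝ)/2 = -(f + 1/2) := by push_cast; linarith [hfdef]
    have e2 : Y + ((q+1:ℤ):ℝ)*(s/2) = η + s/2 := by push_cast; linear_combination hηdef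
    rw [e1, e2]; nlinarith [h]

private lemma eis_approx' (z : ℂ) : ∃ τ ∈ Zω, Complex.normSq (z + τ) ≤ 1/3 := by
  have hs : (Real.sqrt 3)^2 = 3 := Real.sq_sqrt (by norm_num)
  have hs1 : (1:ℝ) ≤ Real.sqrt 3 := by nlinarith [Real.sqrt_nonneg 3]
  obtain ⟨p, q, hpq⟩ := real_approx' (Real.sqrt 3) z.re z.im hs hs1
  refine ⟨(p:ℂ) + (q:ℂ) * ω, ⟨p, q, rfl⟩, ?_⟩
  have hre : (z + ((p:ℂ) + (q:ℂ)*ω)).re = z.re + p - q/2 := by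
    simp [ω]; try ring
  have him : (z + ((p:ℂ) + (q:ℂ)*ω)).im = z.im + q*(Real.sqrt 3/2) := by
    simp [ω]; try ring
  rw [Complex.normSq_apply, hre, him]
  nlinarith [hpq]

private lemma normSq_Zomega' {τ : ℂ} (h : τ ∈ Zω) : ∃ n : ℤ, Complex.normSq τ = (n:ℝ) := by
  obtain ⟨a, b, rfl⟩ := h
  refine ⟨a^2 - a*b + b^2, ?_⟩
  have hs : (Real.sqrt 3)^2 = 3 := Real.sq_sqrt (by norm_num)
  have hre : ((a:ℂ) + (b:ℂ)*ω).re = (a:ℝ) - b/2 := by simp [ω]; try ring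
  have him : ((a:ℂ) + (b:ℂ)*ω).im = (b:ℝ) * (Real.sqrt 3/2) := by simp [ω]; try ring
  rw [Complex.normSq_apply, hre, him]
  push_cast
  linear_combination ((b:ℝ)^2/4) * hs

private lemma entry_eq' (G : Matrix (Fin 4) (Fin 4) ℂ) (τ₁ τ₂ : ℂ) (t : ℝ) :
    (Rmat * N τ₁ τ₂ t * G) 3 0 =
      G 0 0 - (starRingEnd ℂ) τ₁ * G 1 0 - (starRingEnd ℂ) τ₂ * G 2 0
        + (-((Complex.normSq τ₁ : ℂ) + (Complex.normSq τ₂ : ℂ)) + Complex.I * (t : ℝ)) / 2 * G 3 0 := by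
  simp [Matrix.mul_apply, Fin.sum_univ_four, Rmat, N]
  ring

private lemma sqexp' (w τ : ℂ) :
    Complex.normSq (w+τ) = Complex.normSq w + Complex.normSq τ + 2*((starRingEnd ℂ) τ * w).re := by
  simp [Complex.normSq_apply, Complex.mul_re]; ring

end Aux

set_option maxHeartbeats 1000000 in
/-- Descent step: if G ∈ U(3,1; Z[ω]) has G₄₁ ≠ 0, one can decrease |G₄₁|² by a factor of
31/36 by multiplying by R·N_(τ,t) for suitable τ ∈ Z[ω]² and t = √3·k with k of the right
parity. -/
theorem stmt11 (G : Matrix (Fin 4) (Fin 4) ℂ) (hG : Gᴴ * Jm * G = Jm)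
    (hent : ∀ i j, G i j ∈ Zω) (h41 : G 3 0 ≠ 0) :
    ∃ τ₁ τ₂ : ℂ, τ₁ ∈ Zω ∧ τ₂ ∈ Zω ∧
      ∃ k m : ℤ, Complex.normSq τ₁ + Complex.normSq τ₂ = (m : ℝ) ∧ k % 2 = m % 2 ∧
        ‖(Rmat * N τ₁ τ₂ (Real.sqrt 3 * (k : ℝ)) * G) 3 0‖ ^ 2 ≤
          (31 / 36) * ‖G 3 0‖ ^ 2 := by
  have hs : (Real.sqrt 3)^2 = 3 := Real.sq_sqrt (by norm_num)
  have hs1 : (1:ℝ) ≤ Real.sqrt 3 := by nlinarith [Real.sqrt_nonneg 3]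
  have hs0 : (0:ℝ) < Real.sqrt 3 := by linarith
  set a := G 0 0 with ha
  set b := G 1 0 with hb
  set c := G 2 0 with hc
  set d := G 3 0 with hdd
  have hd : d ≠ 0 := h41
  have hd' : (starRingEnd ℂ) d ≠ 0 := by simpa using hd
  -- first-column relation from hG
  have h0 : (starRingEnd ℂ) a * d + (starRingEnd ℂ) b * b + (starRingEnd ℂ) c * c
      + (starRingEnd ℂ) d * a = 0 := by
    have h := congrFun (congrFun hG 0) 0
    simp [Matrix.mul_apply, Fin.sum_univ_four, Matrix.conjTranspose_apply, Jm] at h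
    linear_combination h
  have hC : (starRingEnd ℂ) (a/d) + (starRingEnd ℂ) (b/d) * (b/d)
      + (starRingEnd ℂ) (c/d) * (c/d) + (a/d) = 0 := by
    simp only [map_div₀]
    field_simp
    linear_combination h0
  have hC' : (starRingEnd ℂ) (a/d) + (Complex.normSq (b/d) : ℂ)
      + (Complex.normSq (c/d) : ℂ) + (a/d) = 0 := by
    rw [← Complex.mul_conj (b/d), ← Complex.mul_conj (c/d)]
    linear_combination hC
  have hRe0 : 2*(a/d).re = -(Complex.normSq (b/d) + Complex.normSq (c/d)) := by
    have h' := congrArg Complex.re hC'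
    simp only [Complex.add_re, Complex.conj_re, Complex.ofReal_re, Complex.zero_re] at h'
    linarith
  -- choose lattice points
  obtain ⟨τ₁, hτ₁Z, hS₁⟩ := eis_approx' (b/d)
  obtain ⟨τ₂, hτ₂Z, hS₂⟩ := eis_approx' (c/d)
  obtain ⟨n₁, hn₁⟩ := normSq_Zomega' hτ₁Z
  obtain ⟨n₂, hn₂⟩ := normSq_Zomega' hτ₂Z
  -- choose k
  set Y₀ : ℝ := (a/d).im - ((starRingEnd ℂ) τ₁ * (b/d)).im - ((starRingEnd ℂ) τ₂ * (c/d)).im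
    with hY₀
  set X : ℝ := Y₀ / Real.sqrt 3 + ((n₁ + n₂ : ℤ) : ℝ)/2 with hX
  refine ⟨τ₁, τ₂, hτ₁Z, hτ₂Z, (n₁ + n₂) + 2 * (-round X), n₁ + n₂,
    by push_cast [hn₁, hn₂]; ring, by omega, ?_⟩
  set k : ℤ := (n₁ + n₂) + 2 * (-round X) with hk
  set t : ℝ := Real.sqrt 3 * (k : ℝ) with ht
  set E : ℂ := (a/d) - (starRingEnd ℂ) τ₁ * (b/d) - (starRingEnd ℂ) τ₂ * (c/d)
      + (-((Complex.normSq τ₁ : ℂ) + (Complex.normSq τ₂ : ℂ)) + Complex.I * (t : ℝ)) / 2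
    with hE
  have hEre : E.re = (a/d).re - ((starRingEnd ℂ) τ₁ * (b/d)).re
      - ((starRingEnd ℂ) τ₂ * (c/d)).re - (Complex.normSq τ₁ + Complex.normSq τ₂)/2 := by
    rw [hE]; simp; try ring
  have hEim : E.im = Y₀ + t/2 := by
    rw [hE, hY₀]; simp; try ring
  -- real part bound
  have hre2 : E.re = -(Complex.normSq (b/d + τ₁) + Complex.normSq (c/d + τ₂))/2 := by
    rw [hEre, sqexp' (b/d) τ₁, sqexp' (c/d) τ₂]
    linarith
  have hreBound : E.re^2 ≤ 1/9 := by
    rw [hre2]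
    have h1 := Complex.normSq_nonneg (b/d + τ₁)
    have h2 := Complex.normSq_nonneg (c/d + τ₂)
    nlinarith [hS₁, hS₂]
  -- imaginary part bound
  have himEq : E.im = Real.sqrt 3 * (X - round X) := by
    rw [hEim, ht, hk, hX]
    push_cast
    field_simp
    ring
  have himBound : E.im^2 ≤ 3/4 := by
    rw [himEq]
    have h1 := abs_sub_round X
    have h2 : (X - (round X : ℝ))^2 ≤ 1/4 := by
      obtain ⟨hl, hr⟩ := abs_le.mp h1
      nlinarith [hl, hr]
    rw [mul_pow, hs]
    nlinarith [h2]
  have hEbound : Complex.normSq E ≤ 31/36 := by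
    rw [Complex.normSq_apply]
    nlinarith [hreBound, himBound]
  -- assemble
  have hv : (Rmat * N τ₁ τ₂ t * G) 3 0 = d * E := by
    rw [entry_eq' G τ₁ τ₂ t, hE]
    field_simp
    ring
  rw [hv, Complex.sq_norm, Complex.sq_norm, Complex.normSq_mul]
  nlinarith [Complex.normSq_nonneg d, hEbound]
end
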